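/- For all real numbers T, a, b, c with a > 0, b ≥ 0, c ≥ 0, |a − b| ≤ c ≤ a + b, and a + b < T, one has 0 ≤ 1/√(T² − c²) − 1/√((T + a)² − b²) ≤ 8 · a / ( √(T + a + b) · (T + a − b) · √(T − a − b) ). -/
import Mathlib


open Real

/-- Kernel difference estimate from the proof of Lemma 5.3 (term III_A): for `a > 0`,
`b, c ≥ 0` with `|a − b| ≤ c ≤ a + b` and `a + b < T`,
`0 ≤ 1/√(T² − c²) − 1/√((T + a)² − b²) ≤ 8a/(√(T + a + b) (T + a − b) √(T − a − b))`. -/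
theorem kernel_difference_estimate (T a b c : ℝ) (ha : 0 < a) (hb : 0 ≤ b) (hc : 0 ≤ c)
    (h₁ : |a - b| ≤ c) (h₂ : c ≤ a + b) (hT : a + b < T) :
    0 ≤ 1 / Real.sqrt (T ^ 2 - c ^ 2) - 1 / Real.sqrt ((T + a) ^ 2 - b ^ 2) ∧
      1 / Real.sqrt (T ^ 2 - c ^ 2) - 1 / Real.sqrt ((T + a) ^ 2 - b ^ 2) ≤
        8 * a / (Real.sqrt (T + a + b) * (T + a - b) * Real.sqrt (T - a - b)) := by
  have hc2 : (a - b) ^ 2 ≤ c ^ 2 := by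
    have := sq_abs (a - b)
    nlinarith [abs_nonneg (a - b)]
  have hcu : c ^ 2 ≤ (a + b) ^ 2 := by nlinarith
  have h1 : 0 < T ^ 2 - c ^ 2 := by nlinarith
  have h2 : 0 < (T + a) ^ 2 - b ^ 2 := by nlinarith
  set A := Real.sqrt (T ^ 2 - c ^ 2) with hAdef
  set B := Real.sqrt ((T + a) ^ 2 - b ^ 2) with hBdef
  have hA : 0 < A := Real.sqrt_pos.mpr h1
  have hB : 0 < B := Real.sqrt_pos.mpr h2
  have hA2 : A ^ 2 = T ^ 2 - c ^ 2 := Real.sq_sqrt h1.le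
  have hB2 : B ^ 2 = (T + a) ^ 2 - b ^ 2 := Real.sq_sqrt h2.le
  have hABle : A ≤ B := Real.sqrt_le_sqrt (by nlinarith)
  constructor
  · have := one_div_le_one_div_of_le hA hABle
    linarith
  · set s := Real.sqrt (T - a - b) with hsdef
    set t := Real.sqrt (T + a + b) with htdef
    have hsp : 0 < s := Real.sqrt_pos.mpr (by linarith)
    have htp : 0 < t := Real.sqrt_pos.mpr (by linarith)
    have hs2 : s ^ 2 = T - a - b := Real.sq_sqrt (by linarith)
    have ht2 : t ^ 2 = T + a + b := Real.sq_sqrt (by linarith)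
    have hv : 0 < T + a - b := by linarith
    have hstA : s * t ≤ A := by
      have h3 : (s * t) ^ 2 ≤ T ^ 2 - c ^ 2 := by
        have : (s * t) ^ 2 = (T - a - b) * (T + a + b) := by
          rw [mul_pow, hs2, ht2]
        rw [this]; nlinarith
      have := Real.sqrt_le_sqrt h3
      rwa [Real.sqrt_sq (by positivity : (0:ℝ) ≤ s * t)] at this
    -- key estimates
    have k1 : (B - A) * B ≤ 2 * a * t ^ 2 := by
      have hBASq : (B - A) * (B + A) = B ^ 2 - A ^ 2 := by ring
      have hdiff : B ^ 2 - A ^ 2 ≤ 2 * a * t ^ 2 := by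
        rw [hA2, hB2, ht2]; nlinarith
      nlinarith [mul_nonneg (sub_nonneg.mpr hABle) hA.le]
    have hB2v : B ^ 2 = (T + a - b) * t ^ 2 := by rw [hB2, ht2]; ring
    have k2 : 2 * a * t ^ 2 * (t * (T + a - b) * s) ≤ 8 * a * A * B ^ 2 := by
      have h4 : 0 ≤ 2 * a * (T + a - b) * t ^ 2 := by positivity
      have h5 : 0 ≤ 4 * A - s * t := by linarith
      have h8 := mul_nonneg h4 h5
      have h9 : 8 * a * A * ((T + a - b) * t ^ 2) - 2 * a * t ^ 2 * (t * (T + a - b) * s)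
          = (2 * a * (T + a - b) * t ^ 2) * (4 * A - s * t) := by ring
      rw [hB2v]
      linarith
    have k3 : ((B - A) * (t * (T + a - b) * s)) * B ≤ (8 * a * (A * B)) * B := by
      have h6 : 0 ≤ t * (T + a - b) * s := by positivity
      have h7 : ((B - A) * B) * (t * (T + a - b) * s) ≤
          (2 * a * t ^ 2) * (t * (T + a - b) * s) :=
        mul_le_mul_of_nonneg_right k1 h6
      have e1 : ((B - A) * (t * (T + a - b) * s)) * B = ((B - A) * B) * (t * (T + a - b) * s) := by
        ring
      have e2 : (8 * a * (A * B)) * B = 8 * a * A * B ^ 2 := by ring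
      rw [e1, e2]
      linarith [h7, k2]
    have k4 : (B - A) * (t * (T + a - b) * s) ≤ 8 * a * (A * B) :=
      le_of_mul_le_mul_right k3 hB
    have heq : 1 / A - 1 / B = (B - A) / (A * B) := by
      rw [div_sub_div _ _ hA.ne' hB.ne', one_mul, mul_one]
    rw [heq]
    have hABpos : 0 < A * B := mul_pos hA hB
    have hDpos : 0 < t * (T + a - b) * s := mul_pos (mul_pos htp hv) hsp
    rw [div_le_div_iff₀ hABpos hDpos]
    exact k4
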